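/- Let μ be a finite measure on the closed unit disk, φ : closed unit disk → closed unit disk a homeomorphism that is biholomorphic on the interiors, x₀ in the open disk with φ(x₀) = 0, and q > 0. Then λ_∞(x₀; μ, q) = λ_∞(0; φ_*μ, q), where λ_∞(z; ν, q) = inf { ∫ |Q|^q dν : Q polynomial, Q(z) = 1 } and φ_*μ is the pushforward measure. (Here one uses that any continuous function on the closed disk holomorphic inside can be uniformly approximated by polynomials.) -/

import Mathlib

open MeasureTheory Set Polynomial Filter

set_option maxHeartbeats 1000000

lemma poly_approx_disk (f : ℂ → ℂ) (hc : ContinuousOn f (Metric.closedBall 0 1))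
    (hd : DifferentiableOn ℂ f (Metric.ball 0 1)) {ε : ℝ} (hε : 0 < ε) :
    ∃ P : Polynomial ℂ, ∀ z ∈ Metric.closedBall (0:ℂ) 1, ‖f z - P.eval z‖ ≤ ε := by
  obtain ⟨δ, hδ, hucont⟩ := Metric.uniformContinuousOn_iff.1
    ((isCompact_closedBall (0:ℂ) 1).uniformContinuousOn_of_continuous hc) (ε/2) (by linarith)
  set r : ℝ := max (1 - δ/2) (1/2) with hr
  have hr0 : 0 < r := lt_max_of_lt_right (by norm_num)
  have hr1 : r < 1 := by
    apply max_lt (by linarith) (by norm_num)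
  have hrδ : 1 - r ≤ δ/2 := by
    have := le_max_left (1 - δ/2) (1/2); linarith [this]
  set R : NNReal := Real.toNNReal ((1 + r⁻¹)/2) with hR
  have hrinv : 1 < r⁻¹ := (one_lt_inv₀ hr0).2 hr1
  have hRr : (R : ℝ) = (1 + r⁻¹)/2 := Real.coe_toNNReal _ (by positivity)
  have hR1 : (1:ℝ) < R := by rw [hRr]; linarith
  set g : ℂ → ℂ := fun z => f ((r:ℂ) * z) with hg
  have hmaps : Set.MapsTo (fun z : ℂ => (r:ℂ) * z) (Metric.closedBall 0 (R:ℝ))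
      (Metric.ball 0 1) := by
    intro z hz
    simp only [Metric.mem_closedBall, Metric.mem_ball, dist_zero_right] at hz ⊢
    have : ‖(r:ℂ) * z‖ = r * ‖z‖ := by
      rw [norm_mul, Complex.norm_real, Real.norm_of_nonneg hr0.le]
    rw [this]
    calc r * ‖z‖ ≤ r * ((1 + r⁻¹)/2) := by
          apply mul_le_mul_of_nonneg_left (hRr ▸ hz) hr0.le
      _ = (r + 1)/2 := by field_simp
      _ < 1 := by linarith
  have hgd : DifferentiableOn ℂ g (Metric.closedBall 0 (R:ℝ)) := by
    exact hd.comp ((differentiable_const _).mul differentiable_id).differentiableOn hmaps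
  have hR0 : 0 < R := lt_of_lt_of_le one_pos (by exact_mod_cast hR1.le)
  have hfp : HasFPowerSeriesOnBall g (cauchyPowerSeries g 0 R) 0 R :=
    hgd.hasFPowerSeriesOnBall hR0
  set r' : NNReal := Real.toNNReal ((3 + r⁻¹)/4) with hr'
  have hr'r : (r' : ℝ) = (3 + r⁻¹)/4 := Real.coe_toNNReal _ (by positivity)
  have hr'1 : (1:ℝ) < r' := by rw [hr'r]; linarith
  have hr'R : (r' : ENNReal) < R := by
    rw [ENNReal.coe_lt_coe, ← NNReal.coe_lt_coe, hr'r, hRr]; linarith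
  have htu := hfp.tendstoUniformlyOn hr'R
  rw [Metric.tendstoUniformlyOn_iff] at htu
  obtain ⟨n, hn⟩ := (htu (ε/2) (by linarith)).exists
  set p := cauchyPowerSeries g 0 R with hp
  refine ⟨∑ k ∈ Finset.range n, Polynomial.C (p.coeff k) * Polynomial.X ^ k, fun z hz => ?_⟩
  have hzb : z ∈ Metric.ball (0:ℂ) (r' : ℝ) := by
    simp only [Metric.mem_closedBall, dist_zero_right] at hz
    simp only [Metric.mem_ball, dist_zero_right]
    exact lt_of_le_of_lt hz hr'1
  have heval : Polynomial.eval z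
        (∑ k ∈ Finset.range n, Polynomial.C (p.coeff k) * Polynomial.X ^ k)
      = p.partialSum n z := by
    rw [Polynomial.eval_finset_sum]
    simp only [Polynomial.eval_mul, Polynomial.eval_C, Polynomial.eval_pow, Polynomial.eval_X]
    unfold FormalMultilinearSeries.partialSum
    congr 1; ext k
    rw [FormalMultilinearSeries.apply_eq_pow_smul_coeff, smul_eq_mul]; ring
  rw [heval]
  have h1 : dist (g (0 + z)) (p.partialSum n z) < ε/2 := hn z hzb
  rw [zero_add] at h1
  have hrz : (r:ℂ) * z ∈ Metric.closedBall (0:ℂ) 1 := by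
    simp only [Metric.mem_closedBall, dist_zero_right] at hz ⊢
    rw [norm_mul, Complex.norm_real, Real.norm_of_nonneg hr0.le]
    nlinarith
  have h2 : dist (f z) (g z) < ε/2 := by
    apply hucont z hz ((r:ℂ)*z) hrz
    have : dist z ((r:ℂ)*z) = (1 - r) * ‖z‖ := by
      rw [dist_eq_norm]
      have : z - (r:ℂ)*z = ((1:ℝ) - r : ℝ) * z := by push_cast; ring
      rw [this, norm_mul, Complex.norm_real, Real.norm_of_nonneg (by linarith)]
    rw [this]
    simp only [Metric.mem_closedBall, dist_zero_right] at hz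
    nlinarith [norm_nonneg z]
  calc ‖f z - p.partialSum n z‖ ≤ dist (f z) (g z) + dist (g z) (p.partialSum n z) := by
        rw [← dist_eq_norm]; exact dist_triangle _ _ _
    _ ≤ ε := by simp only [dist_eq_norm] at h1 h2 ⊢; linarith

lemma poly_approx_disk_normalized (f : ℂ → ℂ) (hc : ContinuousOn f (Metric.closedBall 0 1))
    (hd : DifferentiableOn ℂ f (Metric.ball 0 1)) (z₀ : ℂ)
    (hz₀ : z₀ ∈ Metric.closedBall (0:ℂ) 1) (hf1 : f z₀ = 1) {ε : ℝ} (hε : 0 < ε) :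
    ∃ P : Polynomial ℂ, P.eval z₀ = 1 ∧
      ∀ z ∈ Metric.closedBall (0:ℂ) 1, ‖P.eval z - f z‖ ≤ ε := by
  obtain ⟨M, hM⟩ := (isCompact_closedBall (0:ℂ) 1).exists_bound_of_continuousOn hc
  have hM1 : (1:ℝ) ≤ M := by
    have := hM z₀ hz₀; rw [hf1] at this; simpa using this
  set ε₁ : ℝ := min (1/2) (ε / (2 * (1 + M))) with hε₁
  have hε₁pos : 0 < ε₁ := lt_min (by norm_num) (by positivity)
  have hε₁half : ε₁ ≤ 1/2 := min_le_left _ _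
  have hε₁ε : 2 * ε₁ * (1 + M) ≤ ε := by
    have h := min_le_right (1/2) (ε / (2 * (1 + M)))
    have hpos : (0:ℝ) < 2 * (1 + M) := by positivity
    calc 2 * ε₁ * (1 + M) ≤ 2 * (ε / (2 * (1 + M))) * (1 + M) := by nlinarith
      _ = ε := by field_simp
  obtain ⟨P₀, hP₀⟩ := poly_approx_disk f hc hd hε₁pos
  set c : ℂ := P₀.eval z₀ with hcdef
  have hc1 : ‖c - 1‖ ≤ ε₁ := by
    have h := hP₀ z₀ hz₀
    rw [hf1] at h
    calc ‖c - 1‖ = ‖1 - c‖ := by rw [norm_sub_rev]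
      _ ≤ ε₁ := h
  have hcnorm : (1:ℝ)/2 ≤ ‖c‖ := by
    have h1 : ‖(1:ℂ)‖ - ‖c‖ ≤ ‖(1:ℂ) - c‖ := norm_sub_norm_le _ _
    rw [norm_sub_rev] at h1
    simp only [norm_one] at h1
    linarith [hc1]
  have hc0 : c ≠ 0 := by
    intro h; rw [h, norm_zero] at hcnorm; linarith
  have hcinv : ‖c⁻¹‖ ≤ 2 := by
    rw [norm_inv, inv_le_comm₀ (by linarith) (by norm_num)]
    linarith
  have hinvc : c⁻¹ * c = 1 := inv_mul_cancel₀ hc0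
  refine ⟨Polynomial.C c⁻¹ * P₀, by simp [← hcdef, inv_mul_cancel₀ hc0], fun z hz => ?_⟩
  have hMz : ‖f z‖ ≤ M := hM z hz
  have heq : c⁻¹ * P₀.eval z - f z
      = c⁻¹ * (P₀.eval z - f z) + (c⁻¹ * (1 - c)) * f z := by
    linear_combination f z * hinvc
  have hPfz : ‖P₀.eval z - f z‖ ≤ ε₁ := by
    rw [norm_sub_rev]; exact hP₀ z hz
  calc ‖(Polynomial.C c⁻¹ * P₀).eval z - f z‖
      = ‖c⁻¹ * (P₀.eval z - f z) + (c⁻¹ * (1 - c)) * f z‖ := by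
        rw [Polynomial.eval_mul, Polynomial.eval_C, heq]
    _ ≤ ‖c⁻¹ * (P₀.eval z - f z)‖ + ‖(c⁻¹ * (1 - c)) * f z‖ := norm_add_le _ _
    _ = ‖c⁻¹‖ * ‖P₀.eval z - f z‖ + ‖c⁻¹‖ * ‖1 - c‖ * ‖f z‖ := by
        rw [norm_mul, norm_mul, norm_mul]
    _ ≤ 2 * ε₁ + 2 * ε₁ * M := by
        have h1c : ‖1 - c‖ ≤ ε₁ := by rw [norm_sub_rev]; exact hc1
        have hn1 : (0:ℝ) ≤ ‖c⁻¹‖ := norm_nonneg _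
        have hn2 : (0:ℝ) ≤ ‖P₀.eval z - f z‖ := norm_nonneg _
        have hn3 : (0:ℝ) ≤ ‖f z‖ := norm_nonneg _
        have hn4 : (0:ℝ) ≤ ‖1 - c‖ := norm_nonneg _
        have t1 : ‖c⁻¹‖ * ‖P₀.eval z - f z‖ ≤ 2 * ε₁ := mul_le_mul hcinv hPfz hn2 (by norm_num)
        have t2 : ‖c⁻¹‖ * ‖1 - c‖ ≤ 2 * ε₁ := mul_le_mul hcinv h1c hn4 (by norm_num)
        have t3 : ‖c⁻¹‖ * ‖1 - c‖ * ‖f z‖ ≤ 2 * ε₁ * M :=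
          mul_le_mul t2 hMz hn3 (by positivity)
        linarith
    _ = 2 * ε₁ * (1 + M) := by ring
    _ ≤ ε := hε₁ε

lemma key_le (ν : Measure ℂ) [IsFiniteMeasure ν]
    (hνc : ν (Metric.closedBall (0:ℂ) 1)ᶜ = 0)
    (q : ℝ) (hq : 0 < q) (z₀ : ℂ) (g : ℂ → ℂ)
    (hgm : AEStronglyMeasurable g ν)
    (M : ℝ) (hM : ∀ z ∈ Metric.closedBall (0:ℂ) 1, ‖g z‖ ≤ M)
    (happrox : ∀ δ > (0:ℝ), ∃ Q : Polynomial ℂ, Q.eval z₀ = 1 ∧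
      ∀ z ∈ Metric.closedBall (0:ℂ) 1, ‖Q.eval z - g z‖ ≤ δ) :
    sInf {x | ∃ Q : Polynomial ℂ, Q.eval z₀ = 1 ∧ x = ∫ z, ‖Q.eval z‖ ^ q ∂ν}
      ≤ ∫ z, ‖g z‖ ^ q ∂ν := by
  have hae : ∀ᵐ z ∂ν, z ∈ Metric.closedBall (0:ℂ) 1 := by
    rw [MeasureTheory.ae_iff]
    exact hνc
  have hM0 : 0 ≤ M := le_trans (norm_nonneg _) (hM 0 (by simp))
  have hrpow : Continuous fun x : ℝ => x ^ q := Real.continuous_rpow_const hq.le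
  have hbdd : BddBelow {x | ∃ Q : Polynomial ℂ, Q.eval z₀ = 1 ∧ x = ∫ z, ‖Q.eval z‖ ^ q ∂ν} := by
    refine ⟨0, fun x hx => ?_⟩
    obtain ⟨Q, _, rfl⟩ := hx
    exact integral_nonneg fun z => Real.rpow_nonneg (norm_nonneg _) q
  -- the sequence of approximants
  have hδpos : ∀ n : ℕ, (0:ℝ) < ((n:ℝ)+1)⁻¹ := fun n => by positivity
  choose Q hQ1 hQ2 using fun n : ℕ => happrox (((n:ℝ)+1)⁻¹) (hδpos n)
  -- integrability facts
  have hint : ∀ (u : ℂ → ℝ), AEStronglyMeasurable u ν → (∀ z ∈ Metric.closedBall (0:ℂ) 1,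
      |u z| ≤ ((M+1) ^ q)) → Integrable u ν := by
    intro u hu hb
    refine Integrable.mono' (integrable_const ((M+1) ^ q)) hu ?_
    filter_upwards [hae] with z hz
    simpa using hb z hz
  have hintg : Integrable (fun z => ‖g z‖ ^ q) ν := by
    refine hint _ (hrpow.comp_aestronglyMeasurable hgm.norm) (fun z hz => ?_)
    rw [abs_of_nonneg (Real.rpow_nonneg (norm_nonneg _) q)]
    exact Real.rpow_le_rpow (norm_nonneg _) (le_trans (hM z hz) (by linarith)) hq.le
  have hintc : ∀ n : ℕ, Integrable (fun z => (‖g z‖ + ((n:ℝ)+1)⁻¹) ^ q) ν := by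
    intro n
    refine hint _ (hrpow.comp_aestronglyMeasurable (hgm.norm.add aestronglyMeasurable_const))
      (fun z hz => ?_)
    have h1 : ((n:ℝ)+1)⁻¹ ≤ 1 := by
      rw [inv_le_one_iff₀]; right; linarith [Nat.cast_nonneg (α := ℝ) n]
    rw [abs_of_nonneg (Real.rpow_nonneg (by positivity) q)]
    exact Real.rpow_le_rpow (by positivity) (by linarith [hM z hz]) hq.le
  have hintQ : ∀ n : ℕ, Integrable (fun z => ‖(Q n).eval z‖ ^ q) ν := by
    intro n
    refine hint _ (hrpow.comp_aestronglyMeasurable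
      (((Q n).continuous).norm.aestronglyMeasurable)) (fun z hz => ?_)
    have h1 : ((n:ℝ)+1)⁻¹ ≤ 1 := by
      rw [inv_le_one_iff₀]; right; linarith [Nat.cast_nonneg (α := ℝ) n]
    have h2 : ‖(Q n).eval z‖ ≤ M + 1 := by
      have := hQ2 n z hz
      have h3 : ‖(Q n).eval z‖ - ‖g z‖ ≤ ‖(Q n).eval z - g z‖ := norm_sub_norm_le _ _
      linarith [hM z hz]
    rw [abs_of_nonneg (Real.rpow_nonneg (norm_nonneg _) q)]
    exact Real.rpow_le_rpow (norm_nonneg _) h2 hq.le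
  -- step 1 : sInf ≤ cₙ
  have hstep : ∀ n : ℕ,
      sInf {x | ∃ Q : Polynomial ℂ, Q.eval z₀ = 1 ∧ x = ∫ z, ‖Q.eval z‖ ^ q ∂ν}
        ≤ ∫ z, (‖g z‖ + ((n:ℝ)+1)⁻¹) ^ q ∂ν := by
    intro n
    refine le_trans (csInf_le hbdd ⟨Q n, hQ1 n, rfl⟩) ?_
    refine integral_mono_ae (hintQ n) (hintc n) ?_
    filter_upwards [hae] with z hz
    have h1 : ‖(Q n).eval z‖ ≤ ‖g z‖ + ((n:ℝ)+1)⁻¹ := by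
      have h3 : ‖(Q n).eval z‖ - ‖g z‖ ≤ ‖(Q n).eval z - g z‖ := norm_sub_norm_le _ _
      linarith [hQ2 n z hz]
    exact Real.rpow_le_rpow (norm_nonneg _) h1 hq.le
  -- step 2 : cₙ → ∫ ‖g‖^q
  have htend : Tendsto (fun n : ℕ => ∫ z, (‖g z‖ + ((n:ℝ)+1)⁻¹) ^ q ∂ν) atTop
      (nhds (∫ z, ‖g z‖ ^ q ∂ν)) := by
    refine tendsto_integral_of_dominated_convergence (fun _ => (M+1) ^ q)
      (fun n => hrpow.comp_aestronglyMeasurable (hgm.norm.add aestronglyMeasurable_const))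
      (integrable_const _) ?_ ?_
    · intro n
      filter_upwards [hae] with z hz
      have h1 : ((n:ℝ)+1)⁻¹ ≤ 1 := by
        rw [inv_le_one_iff₀]; right; linarith [Nat.cast_nonneg (α := ℝ) n]
      rw [Real.norm_of_nonneg (Real.rpow_nonneg (by positivity) q)]
      exact Real.rpow_le_rpow (by positivity) (by linarith [hM z hz]) hq.le
    · filter_upwards [] with z
      have h1 : Tendsto (fun n : ℕ => ‖g z‖ + ((n:ℝ)+1)⁻¹) atTop (nhds (‖g z‖)) := by
        have := (tendsto_one_div_add_atTop_nhds_zero_nat :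
          Tendsto (fun n : ℕ => 1 / ((n : ℝ) + 1)) atTop (nhds (0:ℝ)))
        simp only [one_div] at this
        simpa using (tendsto_const_nhds (x := ‖g z‖)).add this
      exact (hrpow.continuousAt).tendsto.comp h1 |>.congr (fun n => rfl) |>.congr' (by rfl)
  exact ge_of_tendsto' htend hstep



open MeasureTheory Set

theorem stmt16 (μ : Measure ℂ) [IsFiniteMeasure μ]
    (hμc : μ (Metric.closedBall (0:ℂ) 1)ᶜ = 0)
    (φ ψ : ℂ → ℂ)
    (hφc : ContinuousOn φ (Metric.closedBall 0 1))
    (hφd : DifferentiableOn ℂ φ (Metric.ball 0 1))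
    (hφmaps : Set.MapsTo φ (Metric.closedBall 0 1) (Metric.closedBall 0 1))
    (hφball : Set.MapsTo φ (Metric.ball 0 1) (Metric.ball 0 1))
    (hψc : ContinuousOn ψ (Metric.closedBall 0 1))
    (hψd : DifferentiableOn ℂ ψ (Metric.ball 0 1))
    (hψmaps : Set.MapsTo ψ (Metric.closedBall 0 1) (Metric.closedBall 0 1))
    (hinv₁ : ∀ z ∈ Metric.closedBall (0:ℂ) 1, ψ (φ z) = z)
    (hinv₂ : ∀ z ∈ Metric.closedBall (0:ℂ) 1, φ (ψ z) = z)
    (x₀ : ℂ) (hx₀ : x₀ ∈ Metric.ball (0:ℂ) 1) (hφx₀ : φ x₀ = 0)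
    (q : ℝ) (hq : 0 < q) :
    sInf {x | ∃ Q : Polynomial ℂ, Q.eval x₀ = 1 ∧ x = ∫ z, ‖Q.eval z‖ ^ q ∂μ} =
      sInf {x | ∃ Q : Polynomial ℂ, Q.eval 0 = 1 ∧ x = ∫ z, ‖Q.eval z‖ ^ q ∂(μ.map φ)} := by
  have hx₀c : x₀ ∈ Metric.closedBall (0:ℂ) 1 := Metric.ball_subset_closedBall hx₀
  have haeμ : ∀ᵐ z ∂μ, z ∈ Metric.closedBall (0:ℂ) 1 := by
    rw [MeasureTheory.ae_iff]; exact hμc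
  have hrestr : μ.restrict (Metric.closedBall (0:ℂ) 1) = μ :=
    Measure.restrict_eq_self_of_ae_mem haeμ
  have aemφ : AEMeasurable φ μ := by
    have := hφc.aemeasurable (μ := μ) (measurableSet_closedBall)
    rwa [hrestr] at this
  have hmapfin : IsFiniteMeasure (μ.map φ) := by
    constructor
    rw [Measure.map_apply_of_aemeasurable aemφ MeasurableSet.univ]
    exact lt_of_le_of_lt (measure_mono (Set.subset_univ _)) (measure_lt_top μ Set.univ)
  have hmapc : (μ.map φ) (Metric.closedBall (0:ℂ) 1)ᶜ = 0 := by
    rw [Measure.map_apply_of_aemeasurable aemφ measurableSet_closedBall.compl]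
    refine measure_mono_null (fun z hz => ?_) hμc
    intro hzc
    exact hz (hφmaps hzc)
  have haemap : ∀ᵐ w ∂(μ.map φ), w ∈ Metric.closedBall (0:ℂ) 1 := by
    rw [MeasureTheory.ae_iff]; exact hmapc
  have hrestrmap : (μ.map φ).restrict (Metric.closedBall (0:ℂ) 1) = μ.map φ :=
    Measure.restrict_eq_self_of_ae_mem haemap
  have hrpow : Continuous fun x : ℝ => x ^ q := Real.continuous_rpow_const hq.le
  -- nonemptiness
  have hAne : {x | ∃ Q : Polynomial ℂ, Q.eval x₀ = 1 ∧ x = ∫ z, ‖Q.eval z‖ ^ q ∂μ}.Nonempty :=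
    ⟨_, 1, by simp, rfl⟩
  have hBne : {x | ∃ Q : Polynomial ℂ, Q.eval 0 = 1 ∧
      x = ∫ z, ‖Q.eval z‖ ^ q ∂(μ.map φ)}.Nonempty := ⟨_, 1, by simp, rfl⟩
  apply le_antisymm
  · -- sInf A ≤ sInf B
    refine le_csInf hBne ?_
    rintro b ⟨P, hP0, rfl⟩
    have hPφc : ContinuousOn (fun z => P.eval (φ z)) (Metric.closedBall 0 1) :=
      P.continuous.comp_continuousOn hφc
    have hPφm : AEStronglyMeasurable (fun z => P.eval (φ z)) μ := by
      have := hPφc.aestronglyMeasurable (μ := μ) measurableSet_closedBall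
      rwa [hrestr] at this
    obtain ⟨M, hM⟩ := (isCompact_closedBall (0:ℂ) 1).exists_bound_of_continuousOn
      (P.continuous.continuousOn (s := Metric.closedBall (0:ℂ) 1))
    have key := key_le μ hμc q hq x₀ (fun z => P.eval (φ z)) hPφm M
      (fun z hz => hM _ (hφmaps hz))
      (fun δ hδ => poly_approx_disk_normalized (fun z => P.eval (φ z)) hPφc
        ((P.differentiable.differentiableOn).comp hφd (Set.mapsTo_univ _ _))
        x₀ hx₀c (by simp [hφx₀, hP0]) hδ)
    refine le_trans key (le_of_eq ?_)
    rw [integral_map aemφ]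
    · exact (hrpow.comp (P.continuous.norm)).aestronglyMeasurable
  · -- sInf B ≤ sInf A
    refine le_csInf hAne ?_
    rintro a ⟨Q, hQ0, rfl⟩
    have hQψc : ContinuousOn (fun w => Q.eval (ψ w)) (Metric.closedBall 0 1) :=
      Q.continuous.comp_continuousOn hψc
    have hQψm : AEStronglyMeasurable (fun w => Q.eval (ψ w)) (μ.map φ) := by
      have := hQψc.aestronglyMeasurable (μ := μ.map φ) measurableSet_closedBall
      rwa [hrestrmap] at this
    obtain ⟨M, hM⟩ := (isCompact_closedBall (0:ℂ) 1).exists_bound_of_continuousOn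
      (Q.continuous.continuousOn (s := Metric.closedBall (0:ℂ) 1))
    have hψ0 : ψ 0 = x₀ := by rw [← hφx₀, hinv₁ x₀ hx₀c]
    have key := key_le (μ.map φ) hmapc q hq 0 (fun w => Q.eval (ψ w)) hQψm M
      (fun w hw => hM _ (hψmaps hw))
      (fun δ hδ => poly_approx_disk_normalized (fun w => Q.eval (ψ w)) hQψc
        ((Q.differentiable.differentiableOn).comp hψd (Set.mapsTo_univ _ _))
        0 (by simp) (by simp [hψ0, hQ0]) hδ)
    refine le_trans key (le_of_eq ?_)
    have hm : AEStronglyMeasurable (fun w => ‖Q.eval (ψ w)‖ ^ q) (μ.map φ) :=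
      hrpow.comp_aestronglyMeasurable hQψm.norm
    rw [integral_map aemφ hm]
    refine integral_congr_ae ?_
    filter_upwards [haeμ] with z hz
    simp [hinv₁ z hz]
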